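/- Let k ≥ 2 be an even integer, q a prime power with q ≡ k+1 (mod 2k), and χ_k a multiplicative character of F_q of order k. Then Σ_{s=0}^{k−1} Σ_{t=0}^{k−1} Σ_{v=0}^{k−1} J(χ_k^s, χ_k^t) · J(χ_k^{−s}, χ_k^v) = S_k(q) − 4·R_k(q) + q^2 + q(k^2 − 5k) + k^2 + 4k − 3. -/

import Mathlib

/-- Jacobi sum `J(A,B) = ∑_{a ∈ F} A(a) B(1-a)`. -/
noncomputable def jac {F : Type} [Field F] [Fintype F] (A B : MulChar F ℂ) : ℂ :=
  ∑ a : F, A a * B (1 - a)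

/-- `R_k(q) = ∑_{1 ≤ s,t ≤ k-1, s+t ≢ 0 (k)} J(χ^s, χ^t)`. -/
noncomputable def Rk {F : Type} [Field F] [Fintype F] (k : ℕ) (χ : MulChar F ℂ) : ℂ :=
  ∑ s ∈ Finset.Icc 1 (k - 1), ∑ t ∈ Finset.Icc 1 (k - 1),
    if (s : ZMod k) + t ≠ 0 then jac (χ ^ s) (χ ^ t) else 0

/-- `R⁻_k(q)`: as `R_k(q)` but with each term multiplied by `(-1)^{s+t}`. -/
noncomputable def Rmk {F : Type} [Field F] [Fintype F] (k : ℕ) (χ : MulChar F ℂ) : ℂ :=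
  ∑ s ∈ Finset.Icc 1 (k - 1), ∑ t ∈ Finset.Icc 1 (k - 1),
    if (s : ZMod k) + t ≠ 0 then (-1 : ℂ) ^ (s + t) * jac (χ ^ s) (χ ^ t) else 0

/-- `S_k(q) = ∑_{1 ≤ s,t,v ≤ k-1, s+t,v+t,v-s ≢ 0 (k)} J(χ^s, χ^t) J(χ^{-s}, χ^v)`. -/
noncomputable def Sk {F : Type} [Field F] [Fintype F] (k : ℕ) (χ : MulChar F ℂ) : ℂ :=
  ∑ s ∈ Finset.Icc 1 (k - 1), ∑ t ∈ Finset.Icc 1 (k - 1), ∑ v ∈ Finset.Icc 1 (k - 1),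
    if (s : ZMod k) + t ≠ 0 ∧ (v : ZMod k) + t ≠ 0 ∧ (v : ZMod k) - s ≠ 0 then
      jac (χ ^ s) (χ ^ t) * jac (χ⁻¹ ^ s) (χ ^ v) else 0

/-- `S⁻_k(q)`: as `S_k(q)` but with each term multiplied by `(-1)^{s+t}`. -/
noncomputable def Smk {F : Type} [Field F] [Fintype F] (k : ℕ) (χ : MulChar F ℂ) : ℂ :=
  ∑ s ∈ Finset.Icc 1 (k - 1), ∑ t ∈ Finset.Icc 1 (k - 1), ∑ v ∈ Finset.Icc 1 (k - 1),
    if (s : ZMod k) + t ≠ 0 ∧ (v : ZMod k) + t ≠ 0 ∧ (v : ZMod k) - s ≠ 0 then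
      (-1 : ℂ) ^ (s + t) * (jac (χ ^ s) (χ ^ t) * jac (χ⁻¹ ^ s) (χ ^ v)) else 0

lemma jac_comm {F : Type} [Field F] [Fintype F] (A B : MulChar F ℂ) : jac A B = jac B A :=
  jacobiSum_comm A B

section basics
variable {F : Type} [Field F] [Fintype F]

lemma jac_one_one : jac (1 : MulChar F ℂ) 1 = (Fintype.card F : ℂ) - 2 := jacobiSum_one_one

lemma jac_one_nontrivial {B : MulChar F ℂ} (hB : B ≠ 1) : jac 1 B = -1 :=
  jacobiSum_one_nontrivial hB

lemma jac_nontrivial_one {B : MulChar F ℂ} (hB : B ≠ 1) : jac B 1 = -1 := by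
  rw [jac_comm]; exact jacobiSum_one_nontrivial hB

lemma jac_inv {A : MulChar F ℂ} (hA : A ≠ 1) : jac A A⁻¹ = -A (-1) :=
  jacobiSum_nontrivial_inv hA

lemma jac_mul_jac_inv {A B : MulChar F ℂ} (hA : A ≠ 1) (hB : B ≠ 1) (hAB : A * B ≠ 1) :
    jac A B * jac A⁻¹ B⁻¹ = (Fintype.card F : ℂ) := by
  refine jacobiSum_mul_jacobiSum_inv ?_ hA hB hAB
  rw [ringChar.eq_zero]
  exact (CharP.ringChar_ne_zero_of_finite F).symm

lemma mc_apply_inv (A : MulChar F ℂ) {c : F} (hc : c ≠ 0) : A c⁻¹ = (A c)⁻¹ := by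
  have h1 : A c⁻¹ * A c = 1 := by rw [← map_mul, inv_mul_cancel₀ hc, map_one]
  exact eq_inv_of_mul_eq_one_left h1

lemma jac_swap (A B : MulChar F ℂ) : jac A B = B (-1) * jac ((A * B)⁻¹) B := by
  unfold jac
  rw [Finset.mul_sum]
  rw [← (Fintype.sum_bijective (fun c : F => c⁻¹) inv_involutive.bijective _ _ (fun c => rfl) :
    ∑ c : F, A c⁻¹ * B (1 - c⁻¹) = ∑ a : F, A a * B (1 - a))]
  refine Finset.sum_congr rfl fun c _ => ?_
  by_cases hc : c = 0
  · simp [hc, MulChar.map_nonunit]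
  · have h1 : (1 : F) - c⁻¹ = (1 - c) * (-1) * c⁻¹ := by field_simp; ring
    rw [h1, map_mul, map_mul, mc_apply_inv A hc, mc_apply_inv B hc,
      MulChar.inv_apply', mc_apply_inv (A*B) hc, MulChar.mul_apply, mul_inv]
    ring

lemma jac_swap' (A B : MulChar F ℂ) : jac A B = A (-1) * jac A ((A * B)⁻¹) := by
  rw [jac_comm A B, jac_swap B A, mul_comm B A, jac_comm]

end basics

section helpers
variable {F : Type} [Field F] [Fintype F] {k : ℕ} {χ : MulChar F ℂ}

lemma hmlem {k : ℕ} (m : ℕ) (h1 : k ≤ m) (h2 : m < 2*k) : m % k = m - k := by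
  rw [Nat.mod_eq_sub_mod h1, Nat.mod_eq_of_lt (by omega)]

lemma cond_add (hk : 2 ≤ k) {s t : ℕ} (hs : s ∈ Finset.Icc 1 (k-1))
    (ht : t ∈ Finset.Icc 1 (k-1)) : ((s : ZMod k) + t = 0) ↔ s + t = k := by
  haveI : NeZero k := ⟨by omega⟩
  rw [Finset.mem_Icc] at hs ht
  have hcast : ((s : ZMod k) + t) = ((s + t : ℕ) : ZMod k) := by push_cast; ring
  rw [hcast, ZMod.natCast_eq_zero_iff]
  constructor
  · intro hdvd
    have h3 : (s+t) % k = 0 := Nat.mod_eq_zero_of_dvd hdvd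
    rcases lt_or_ge (s+t) k with h|h
    · rw [Nat.mod_eq_of_lt h] at h3; omega
    · rw [hmlem _ h (by omega)] at h3; omega
  · intro h; rw [h]

lemma cond_sub (hk : 2 ≤ k) {v s : ℕ} (hv : v ∈ Finset.Icc 1 (k-1))
    (hs : s ∈ Finset.Icc 1 (k-1)) : ((v : ZMod k) - s = 0) ↔ v = s := by
  rw [Finset.mem_Icc] at hs hv
  rw [sub_eq_zero, ZMod.natCast_eq_natCast_iff]
  unfold Nat.ModEq
  rw [Nat.mod_eq_of_lt (by omega), Nat.mod_eq_of_lt (by omega)]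

lemma pow_k (hχ : orderOf χ = k) : χ ^ k = 1 := by rw [← hχ]; exact pow_orderOf_eq_one χ

lemma pow_ne_one (hχ : orderOf χ = k) {s : ℕ} (h1 : 1 ≤ s) (h2 : s ≤ k - 1) : χ ^ s ≠ 1 := by
  intro h
  have h3 := orderOf_dvd_of_pow_eq_one h
  rw [hχ] at h3
  have h4 := Nat.le_of_dvd (by omega) h3
  have : 2 ≤ k := by
    by_contra hc
    interval_cases k <;> omega
  omega

lemma pow_k_sub (hχ : orderOf χ = k) {s : ℕ} (h : s ≤ k) : χ ^ (k - s) = (χ ^ s)⁻¹ := by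
  apply eq_inv_of_mul_eq_one_left
  rw [← pow_add]
  have : k - s + s = k := by omega
  rw [this, pow_k hχ]

lemma neg_pow_app (hneg : χ (-1) = -1) {s : ℕ} (hs : s ≠ 0) :
    (χ ^ s) (-1 : F) = (-1 : ℂ) ^ s := by
  rw [MulChar.pow_apply' χ hs, hneg]

lemma chi_inv_neg (hneg : χ (-1) = -1) : χ⁻¹ (-1 : F) = -1 := by
  rw [MulChar.inv_apply', inv_neg, inv_one, hneg]

lemma inv_neg_pow_app (hneg : χ (-1) = -1) {s : ℕ} (hs : s ≠ 0) :
    (χ⁻¹ ^ s) (-1 : F) = (-1 : ℂ) ^ s := by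
  rw [MulChar.pow_apply' χ⁻¹ hs, chi_inv_neg hneg]

lemma neg_one_pow_cancel {s : ℕ} (x : ℂ) : (-1 : ℂ) ^ s * ((-1 : ℂ) ^ s * x) = x := by
  rw [← mul_assoc, ← pow_add]
  have : Even (s + s) := ⟨s, rfl⟩
  rw [this.neg_one_pow, one_mul]

lemma neg_one_pow_sub {s : ℕ} (hke : Even k) (h : s ≤ k) : (-1 : ℂ) ^ (k - s) = (-1 : ℂ) ^ s := by
  have h1 : (-1 : ℂ) ^ (k - s) * (-1 : ℂ) ^ s = 1 := by
    rw [← pow_add]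
    have : k - s + s = k := by omega
    rw [this, hke.neg_one_pow]
  have h2 : (-1 : ℂ) ^ s * (-1 : ℂ) ^ s = 1 := by
    rw [← pow_add]; exact Even.neg_one_pow ⟨s, rfl⟩
  calc (-1 : ℂ) ^ (k - s) = (-1 : ℂ) ^ (k - s) * ((-1 : ℂ) ^ s * (-1 : ℂ) ^ s) := by rw [h2, mul_one]
    _ = (-1 : ℂ) ^ s := by rw [← mul_assoc, h1, one_mul]


lemma chi_neg_one {F : Type} [Field F] [Fintype F] {k q : ℕ} (hk : 2 ≤ k) (hkeven : Even k)
    (hq : Fintype.card F = q) (hmod : q % (2*k) = k+1) {χ : MulChar F ℂ} (hχ : orderOf χ = k) :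
    χ (-1) = -1 := by
  classical
  obtain ⟨g, hg⟩ := IsCyclic.exists_generator (α := Fˣ)
  have hog : orderOf g = q - 1 := by
    rw [orderOf_eq_card_of_forall_mem_zpowers hg, Nat.card_eq_fintype_card, Fintype.card_units, hq]
  have hgor : orderOf (g : F) = q - 1 := by rw [orderOf_units, hog]
  have hq3 : k + 1 ≤ q := by have := Nat.mod_le q (2*k); omega
  obtain ⟨k2, hk2⟩ := hkeven
  have hqodd : q % 2 = 1 := by
    obtain ⟨m, hm⟩ : 2 ∣ (2*k)*(q/(2*k)) := Dvd.dvd.mul_right (dvd_mul_right 2 k) _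
    have := Nat.div_add_mod q (2*k)
    omega
  set e := (q-1)/2 with he
  have he2 : e * 2 = q - 1 := by omega
  have hy2 : ((g:F)^e)^2 = 1 := by
    rw [← pow_mul, he2, ← hgor, pow_orderOf_eq_one]
  have hy1 : (g:F)^e ≠ 1 := by
    intro h
    have h2 := orderOf_dvd_of_pow_eq_one h
    rw [hgor] at h2
    have := Nat.le_of_dvd (by omega) h2
    omega
  have hyneg : (g:F)^e = -1 := by
    have h2 : ((g:F)^e - 1) * ((g:F)^e + 1) = 0 := by linear_combination hy2
    rcases mul_eq_zero.mp h2 with h|h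
    · exact absurd (by linear_combination h) hy1
    · linear_combination h
  have hval : ∀ n : ℕ, ((χ ^ n) ((g:F))) = (χ (g:F))^n := by
    intro n
    rcases Nat.eq_zero_or_pos n with rfl|hn
    · rw [pow_zero, pow_zero, MulChar.one_apply_coe]
    · exact MulChar.pow_apply' χ hn.ne' _
  have key : ∀ n : ℕ, χ ^ n = 1 ↔ (χ (g:F)) ^ n = 1 := by
    intro n
    constructor
    · intro h; rw [← hval, h, MulChar.one_apply_coe]
    · intro h
      apply MulChar.ext
      intro a
      obtain ⟨m, hm⟩ : ∃ m : ℕ, g ^ m = a := by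
        have := hg a
        rwa [← mem_powers_iff_mem_zpowers, Submonoid.mem_powers_iff] at this
      rw [← hm, MulChar.one_apply_coe, Units.val_pow_eq_pow_val, map_pow, hval, h, one_pow]
  have horder : orderOf (χ (g:F)) = k := by
    rw [← hχ]
    exact orderOf_eq_orderOf_iff.mpr fun n => (key n).symm
  have hm1 : χ (-1 : F) = (χ (g:F))^e := by rw [← hyneg, map_pow]
  have hek : ∃ m, e = k*m + k/2 := by
    refine ⟨q/(2*k), ?_⟩
    have h1 : 2*k*(q/(2*k)) + q % (2*k) = q := Nat.div_add_mod q (2*k)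
    have h2 : 2*k*(q/(2*k)) = 2*(k*(q/(2*k))) := by ring
    rw [h2, hmod] at h1
    generalize k*(q/(2*k)) = K at h1 ⊢
    omega
  obtain ⟨m, hme⟩ := hek
  have hck : (χ (g:F))^k = 1 := by rw [← horder, pow_orderOf_eq_one]
  have hw2 : ((χ (g:F))^(k/2))^2 = 1 := by
    rw [← pow_mul]
    have h3 : k/2*2 = k := by omega
    rw [h3, hck]
  have hw1 : (χ (g:F))^(k/2) ≠ 1 := by
    intro h
    have h2 := orderOf_dvd_of_pow_eq_one h
    rw [horder] at h2
    have := Nat.le_of_dvd (by omega) h2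
    omega
  have hwneg : (χ (g:F))^(k/2) = -1 := by
    have h2 : ((χ (g:F))^(k/2) - 1) * ((χ (g:F))^(k/2) + 1) = 0 := by linear_combination hw2
    rcases mul_eq_zero.mp h2 with h|h
    · exact absurd (by linear_combination h) hw1
    · linear_combination h
  rw [hm1, hme, pow_add, pow_mul, hck, one_pow, one_mul, hwneg]

lemma jac_transform {F : Type} [Field F] [Fintype F] {k : ℕ} {χ : MulChar F ℂ}
    (hχ : orderOf χ = k) (hneg : χ (-1) = -1) {s t : ℕ}
    (hs : s ∈ Finset.Icc 1 (k-1)) (ht : t ∈ Finset.Icc 1 (k-1)) :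
    (-1 : ℂ) ^ s * jac (χ ^ s) (χ ^ t) = jac (χ ^ s) (χ ^ ((2*k - s - t) % k)) := by
  rw [Finset.mem_Icc] at hs ht
  have hk1 : 2 ≤ k := by omega
  have hinv : (χ ^ s * χ ^ t)⁻¹ = χ ^ ((2*k - s - t) % k) := by
    have h1 : χ ^ ((2*k - s - t) % k) = χ ^ (2*k - s - t) := by
      have h := pow_mod_orderOf χ (2*k - s - t)
      rwa [hχ] at h
    symm
    apply eq_inv_of_mul_eq_one_left
    rw [h1, ← pow_add χ s t, ← pow_add]
    have h2 : 2*k - s - t + (s + t) = k * 2 := by omega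
    rw [h2, pow_mul, pow_k hχ, one_pow]
  rw [jac_swap' (χ ^ s) (χ ^ t), hinv, neg_pow_app hneg (by omega), neg_one_pow_cancel]

end helpers

section sums
variable {F : Type} [Field F] [Fintype F] {k : ℕ} {χ : MulChar F ℂ}

lemma sum_rev {k : ℕ} (G : ℕ → ℂ) :
    ∑ s ∈ Finset.Icc 1 (k-1), G (k - s) = ∑ s ∈ Finset.Icc 1 (k-1), G s := by
  refine Finset.sum_nbij' (fun s => k - s) (fun s => k - s) ?_ ?_ ?_ ?_ ?_ <;>
    intro a ha <;> simp only [Finset.mem_Icc] at * <;> first | omega | rfl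

lemma filter_add_eq (hk : 2 ≤ k) {s : ℕ} (hs : s ∈ Finset.Icc 1 (k-1)) :
    ((Finset.Icc 1 (k-1)).filter fun t : ℕ => ¬ ((s : ZMod k) + (t : ZMod k) ≠ 0)) = {k - s} := by
  have hsb := Finset.mem_Icc.mp hs
  ext t
  simp only [Finset.mem_filter, Finset.mem_singleton, not_not]
  constructor
  · rintro ⟨ht, hc⟩
    have hb := Finset.mem_Icc.mp ht
    have := (cond_add hk hs ht).mp hc
    omega
  · intro h
    subst h
    have hm : k - s ∈ Finset.Icc 1 (k-1) := Finset.mem_Icc.mpr (by omega)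
    exact ⟨hm, (cond_add hk hs hm).mpr (by omega)⟩

lemma filter_add_eq2 (hk : 2 ≤ k) {t : ℕ} (ht : t ∈ Finset.Icc 1 (k-1)) :
    ((Finset.Icc 1 (k-1)).filter fun v : ℕ => ¬ ((v : ZMod k) + (t : ZMod k) ≠ 0)) = {k - t} := by
  have htb := Finset.mem_Icc.mp ht
  ext v
  simp only [Finset.mem_filter, Finset.mem_singleton, not_not]
  constructor
  · rintro ⟨hv, hc⟩
    have hb := Finset.mem_Icc.mp hv
    have := (cond_add hk hv ht).mp hc
    omega
  · intro h
    subst h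
    have hm : k - t ∈ Finset.Icc 1 (k-1) := Finset.mem_Icc.mpr (by omega)
    exact ⟨hm, (cond_add hk hm ht).mpr (by omega)⟩

lemma filter_sub_eq (hk : 2 ≤ k) {s : ℕ} (hs : s ∈ Finset.Icc 1 (k-1)) :
    ((Finset.Icc 1 (k-1)).filter fun v : ℕ => ¬ ((v : ZMod k) - (s : ZMod k) ≠ 0)) = {s} := by
  ext v
  simp only [Finset.mem_filter, Finset.mem_singleton, not_not]
  constructor
  · rintro ⟨hv, hc⟩
    exact (cond_sub hk hv hs).mp hc
  · intro h
    subst h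
    exact ⟨hs, (cond_sub hk hs hs).mpr rfl⟩

lemma pow_mul_ne_one (hk : 2 ≤ k) (hχ : orderOf χ = k) {s t : ℕ}
    (hs : s ∈ Finset.Icc 1 (k-1)) (ht : t ∈ Finset.Icc 1 (k-1)) (hst : s + t ≠ k) :
    χ ^ s * χ ^ t ≠ 1 := by
  have hsb := Finset.mem_Icc.mp hs
  have htb := Finset.mem_Icc.mp ht
  rw [← pow_add]
  intro h
  have hd := orderOf_dvd_of_pow_eq_one h
  rw [hχ] at hd
  have h3 : (s+t) % k = 0 := Nat.mod_eq_zero_of_dvd hd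
  rcases lt_or_ge (s+t) k with hlt|hge
  · rw [Nat.mod_eq_of_lt hlt] at h3; omega
  · rw [hmlem _ hge (by omega)] at h3; omega

lemma sumZ (hk : 2 ≤ k) (hχ : orderOf χ = k) (hneg : χ (-1) = -1) :
    ∑ s ∈ Finset.Icc 1 (k-1), ∑ t ∈ Finset.Icc 1 (k-1),
      (if (s : ZMod k) + t ≠ 0 then (-1:ℂ)^s * jac (χ ^ s) (χ ^ t) else 0) = Rk k χ := by
  unfold Rk
  refine Finset.sum_congr rfl fun s hs => ?_
  have hsb := Finset.mem_Icc.mp hs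
  rw [← Finset.sum_filter, ← Finset.sum_filter]
  have hmem : ∀ t ∈ (Finset.Icc 1 (k-1)).filter (fun t : ℕ => (s : ZMod k) + (t : ZMod k) ≠ 0),
      (2*k - s - t) % k ∈ (Finset.Icc 1 (k-1)).filter (fun t : ℕ => (s : ZMod k) + (t : ZMod k) ≠ 0)
      ∧ (2*k - s - ((2*k - s - t) % k)) % k = t := by
    intro t htm
    obtain ⟨ht, hc⟩ := Finset.mem_filter.mp htm
    have htb := Finset.mem_Icc.mp ht
    have hstk : s + t ≠ k := fun h => hc ((cond_add hk hs ht).mpr h)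
    have hu : ((2*k - s - t) % k = 2*k - s - t ∧ k < s + t)
        ∨ ((2*k - s - t) % k = k - s - t ∧ s + t < k) := by
      rcases lt_or_ge (2*k - s - t) k with h|h
      · exact Or.inl ⟨Nat.mod_eq_of_lt h, by omega⟩
      · refine Or.inr ⟨?_, by omega⟩
        rw [hmlem _ h (by omega)]; omega
    have hub : 1 ≤ (2*k - s - t) % k ∧ (2*k - s - t) % k ≤ k - 1 := by
      rcases hu with ⟨h,h'⟩|⟨h,h'⟩ <;> omega
    have humem : (2*k - s - t) % k ∈ Finset.Icc 1 (k-1) := Finset.mem_Icc.mpr hub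
    have hsu : s + ((2*k - s - t) % k) ≠ k := by rcases hu with ⟨h,h'⟩|⟨h,h'⟩ <;> omega
    refine ⟨Finset.mem_filter.mpr ⟨humem, fun h => hsu ((cond_add hk hs humem).mp h)⟩, ?_⟩
    rcases hu with ⟨h,h'⟩|⟨h,h'⟩
    · rw [h]
      have h2 : 2*k - s - (2*k - s - t) = t := by omega
      rw [h2, Nat.mod_eq_of_lt (by omega)]
    · rw [h]
      have h2 : 2*k - s - (k - s - t) = k + t := by omega
      rw [h2, hmlem _ (by omega) (by omega)]
      omega
  refine Finset.sum_nbij' (fun t => (2*k - s - t) % k) (fun t => (2*k - s - t) % k)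
    (fun t htm => (hmem t htm).1) (fun t htm => (hmem t htm).1)
    (fun t htm => (hmem t htm).2) (fun t htm => (hmem t htm).2) ?_
  intro t htm
  obtain ⟨ht, hc⟩ := Finset.mem_filter.mp htm
  exact jac_transform hχ hneg hs ht

lemma sumW_sign (hk : 2 ≤ k) (hkeven : Even k) (hχ : orderOf χ = k) (ε : ℕ → ℂ)
    (hε : ∀ s, 1 ≤ s → s ≤ k - 1 → ε (k - s) = ε s) :
    ∑ s ∈ Finset.Icc 1 (k-1), ∑ v ∈ Finset.Icc 1 (k-1),
      (if (v : ZMod k) - s ≠ 0 then ε s * jac (χ⁻¹ ^ s) (χ ^ v) else 0)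
    = ∑ s ∈ Finset.Icc 1 (k-1), ∑ t ∈ Finset.Icc 1 (k-1),
      (if (s : ZMod k) + t ≠ 0 then ε s * jac (χ ^ s) (χ ^ t) else 0) := by
  refine (Finset.sum_congr rfl fun s hs => ?_).trans
    (sum_rev (fun s => ∑ t ∈ Finset.Icc 1 (k-1),
      (if (s : ZMod k) + t ≠ 0 then ε s * jac (χ ^ s) (χ ^ t) else 0)))
  have hsb := Finset.mem_Icc.mp hs
  have hks : k - s ∈ Finset.Icc 1 (k-1) := Finset.mem_Icc.mpr (by omega)
  refine Finset.sum_congr rfl fun v hv => ?_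
  have hvb := Finset.mem_Icc.mp hv
  have hiff : ((v : ZMod k) - s ≠ 0) ↔ (((k - s : ℕ) : ZMod k) + v ≠ 0) := by
    rw [not_iff_not, cond_sub hk hv hs, cond_add hk hks hv]
    omega
  have hval : jac (χ⁻¹ ^ s) (χ ^ v) = jac (χ ^ (k - s)) (χ ^ v) := by
    rw [pow_k_sub hχ (by omega), inv_pow]
  have hepsv : ε s = ε (k - s) := (hε s hsb.1 hsb.2).symm
  rw [hval, hepsv, if_congr hiff rfl rfl]

lemma sumW (hk : 2 ≤ k) (hkeven : Even k) (hχ : orderOf χ = k) :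
    ∑ s ∈ Finset.Icc 1 (k-1), ∑ v ∈ Finset.Icc 1 (k-1),
      (if (v : ZMod k) - s ≠ 0 then jac (χ⁻¹ ^ s) (χ ^ v) else 0) = Rk k χ := by
  have h := sumW_sign hk hkeven hχ (fun _ => 1) (fun _ _ _ => rfl)
  simp only [one_mul] at h
  rw [h]; rfl

lemma sumZW (hk : 2 ≤ k) (hkeven : Even k) (hχ : orderOf χ = k) (hneg : χ (-1) = -1) :
    ∑ s ∈ Finset.Icc 1 (k-1), ∑ v ∈ Finset.Icc 1 (k-1),
      (if (v : ZMod k) - s ≠ 0 then (-1:ℂ)^s * jac (χ⁻¹ ^ s) (χ ^ v) else 0) = Rk k χ := by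
  have h := sumW_sign hk hkeven hχ (fun s => (-1:ℂ)^s)
    (fun s h1 h2 => neg_one_pow_sub hkeven (by omega))
  rw [h, sumZ hk hχ hneg]

end sums


set_option maxHeartbeats 3200000 in
theorem stmt_14 {F : Type} [Field F] [Fintype F] (q k : ℕ)
    (hk : 2 ≤ k) (hkeven : Even k) (hq : Fintype.card F = q)
    (hmod : q % (2 * k) = k + 1)
    (χ : MulChar F ℂ) (hχ : orderOf χ = k) :
    ∑ s ∈ Finset.range k, ∑ t ∈ Finset.range k, ∑ v ∈ Finset.range k,
        jac (χ ^ s) (χ ^ t) * jac (χ⁻¹ ^ s) (χ ^ v) =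
      Sk k χ - 4 * Rk k χ + (q : ℂ) ^ 2 + (q : ℂ) * ((k : ℂ) ^ 2 - 5 * (k : ℂ))
        + (k : ℂ) ^ 2 + 4 * (k : ℂ) - 3 := by
  classical
  have hneg : χ (-1) = -1 := chi_neg_one hk hkeven hq hmod hχ
  have hQ : (Fintype.card F : ℂ) = (q : ℂ) := by rw [hq]
  have h0D : (0:ℕ) ∉ Finset.Icc 1 (k-1) := by simp
  have hsplit : ∀ f : ℕ → ℂ,
      ∑ x ∈ Finset.range k, f x = f 0 + ∑ x ∈ Finset.Icc 1 (k-1), f x := by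
    intro f
    have h1 : Finset.range k = insert 0 (Finset.Icc 1 (k-1)) := by
      ext x; simp only [Finset.mem_range, Finset.mem_insert, Finset.mem_Icc]; omega
    rw [h1, Finset.sum_insert h0D]
  have hDcard : (Finset.Icc 1 (k-1)).card = k - 1 := by rw [Nat.card_Icc]; omega
  have hk1 : ((k - 1 : ℕ) : ℂ) = (k:ℂ) - 1 := by
    rw [Nat.cast_sub (by omega)]; norm_num
  have hne : ∀ s ∈ Finset.Icc 1 (k-1), χ ^ s ≠ 1 := fun s hsm => by
    have h := Finset.mem_Icc.mp hsm; exact pow_ne_one hχ h.1 h.2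
  have hnei : ∀ s ∈ Finset.Icc 1 (k-1), χ⁻¹ ^ s ≠ 1 := fun s hsm => by
    rw [inv_pow, ne_eq, inv_eq_one]; exact hne s hsm
  have hsumneg : ∑ s ∈ Finset.Icc 1 (k-1), (-1:ℂ)^s = -1 := by
    have h1 := neg_one_geom_sum (R := ℂ) (n := k)
    rw [if_pos hkeven] at h1
    have h2 := hsplit (fun s => (-1:ℂ)^s)
    rw [h1] at h2
    simp only [pow_zero] at h2
    linear_combination -h2
  have hA1 : ∑ t ∈ Finset.range k, jac (1 : MulChar F ℂ) (χ ^ t) = (q:ℂ) - k - 1 := by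
    rw [hsplit (fun t => jac (1 : MulChar F ℂ) (χ ^ t)), pow_zero, jac_one_one, hQ]
    have h2 : ∑ t ∈ Finset.Icc 1 (k-1), jac (1 : MulChar F ℂ) (χ ^ t)
        = ∑ _t ∈ Finset.Icc 1 (k-1), (-1:ℂ) :=
      Finset.sum_congr rfl fun t htm => jac_one_nontrivial (hne t htm)
    rw [h2, Finset.sum_const, hDcard, nsmul_eq_mul, hk1]
    ring
  have hP0 : ∑ t ∈ Finset.range k, ∑ v ∈ Finset.range k,
      jac (χ ^ 0) (χ ^ t) * jac (χ⁻¹ ^ 0) (χ ^ v)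
      = ((q:ℂ) - k - 1) * ((q:ℂ) - k - 1) := by
    simp only [pow_zero]
    rw [← Finset.sum_mul_sum, hA1]
  have hWin : ∀ s ∈ Finset.Icc 1 (k-1),
      ∑ v ∈ Finset.Icc 1 (k-1), jac (χ⁻¹ ^ s) (χ ^ v)
      = (∑ v ∈ Finset.Icc 1 (k-1),
          if (v : ZMod k) - s ≠ 0 then jac (χ⁻¹ ^ s) (χ ^ v) else 0) - (-1:ℂ)^s := by
    intro s hsm
    have hs0 : s ≠ 0 := by have := Finset.mem_Icc.mp hsm; omega
    rw [← Finset.sum_filter_add_sum_filter_not (Finset.Icc 1 (k-1))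
      (fun v : ℕ => (v : ZMod k) - (s : ZMod k) ≠ 0), Finset.sum_filter, filter_sub_eq hk hsm,
      Finset.sum_singleton]
    have hx : χ ^ s = (χ⁻¹ ^ s)⁻¹ := by rw [inv_pow, inv_inv]
    rw [hx, jac_inv (hnei s hsm), inv_neg_pow_app hneg hs0]
    ring
  have hJin : ∀ s ∈ Finset.Icc 1 (k-1),
      ∑ t ∈ Finset.Icc 1 (k-1), jac (χ ^ s) (χ ^ t)
      = (∑ t ∈ Finset.Icc 1 (k-1),
          if (s : ZMod k) + t ≠ 0 then jac (χ ^ s) (χ ^ t) else 0) - (-1:ℂ)^s := by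
    intro s hsm
    have hsb := Finset.mem_Icc.mp hsm
    rw [← Finset.sum_filter_add_sum_filter_not (Finset.Icc 1 (k-1))
      (fun t : ℕ => (s : ZMod k) + (t : ZMod k) ≠ 0), Finset.sum_filter, filter_add_eq hk hsm,
      Finset.sum_singleton, pow_k_sub hχ (by omega : s ≤ k), jac_inv (hne s hsm),
      neg_pow_app hneg (by omega)]
    ring
  have hPB : ∑ s ∈ Finset.Icc 1 (k-1), ∑ v ∈ Finset.range k,
      jac (χ ^ s) (χ ^ 0) * jac (χ⁻¹ ^ s) (χ ^ v) = (k:ℂ) - 2 - Rk k χ := by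
    have h1 : ∀ s ∈ Finset.Icc 1 (k-1), ∑ v ∈ Finset.range k,
        jac (χ ^ s) (χ ^ 0) * jac (χ⁻¹ ^ s) (χ ^ v)
        = 1 + (-1:ℂ)^s - (∑ v ∈ Finset.Icc 1 (k-1),
            if (v : ZMod k) - s ≠ 0 then jac (χ⁻¹ ^ s) (χ ^ v) else 0) := by
      intro s hsm
      rw [← Finset.mul_sum, pow_zero, jac_nontrivial_one (hne s hsm),
        hsplit (fun v => jac (χ⁻¹ ^ s) (χ ^ v)), pow_zero, jac_nontrivial_one (hnei s hsm),
        hWin s hsm]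
      ring
    rw [Finset.sum_congr rfl h1, Finset.sum_sub_distrib, Finset.sum_add_distrib,
      Finset.sum_const, hDcard, nsmul_eq_mul, hk1, hsumneg, sumW hk hkeven hχ]
    ring
  have hRkdef : Rk k χ = ∑ s ∈ Finset.Icc 1 (k-1), ∑ t ∈ Finset.Icc 1 (k-1),
      (if (s : ZMod k) + t ≠ 0 then jac (χ ^ s) (χ ^ t) else 0) := rfl
  have hPC : ∑ s ∈ Finset.Icc 1 (k-1), ∑ t ∈ Finset.Icc 1 (k-1),
      jac (χ ^ s) (χ ^ t) * jac (χ⁻¹ ^ s) (χ ^ 0) = -Rk k χ - 1 := by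
    have h1 : ∀ s ∈ Finset.Icc 1 (k-1), ∑ t ∈ Finset.Icc 1 (k-1),
        jac (χ ^ s) (χ ^ t) * jac (χ⁻¹ ^ s) (χ ^ 0)
        = -((∑ t ∈ Finset.Icc 1 (k-1),
            if (s : ZMod k) + t ≠ 0 then jac (χ ^ s) (χ ^ t) else 0) - (-1:ℂ)^s) := by
      intro s hsm
      rw [pow_zero, jac_nontrivial_one (hnei s hsm)]
      simp only [mul_neg_one]
      rw [Finset.sum_neg_distrib, hJin s hsm]
    rw [Finset.sum_congr rfl h1]
    simp only [neg_sub]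
    rw [Finset.sum_sub_distrib, hsumneg, ← hRkdef]
    ring
  -- the triple sum over D^3
  have hsq : ∀ s : ℕ, (-1:ℂ)^s * (-1:ℂ)^s = 1 := fun s => by
    rw [← pow_add]; exact Even.neg_one_pow ⟨s, rfl⟩
  have hT1 : ∑ s ∈ Finset.Icc 1 (k-1), ∑ t ∈ Finset.Icc 1 (k-1), ∑ v ∈ Finset.Icc 1 (k-1),
      (if ¬ ((s : ZMod k) + t ≠ 0) then jac (χ ^ s) (χ ^ t) * jac (χ⁻¹ ^ s) (χ ^ v) else 0)
      = ((k:ℂ) - 1) - Rk k χ := by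
    have e1 : ∀ s ∈ Finset.Icc 1 (k-1),
        (∑ t ∈ Finset.Icc 1 (k-1), ∑ v ∈ Finset.Icc 1 (k-1),
          if ¬ ((s : ZMod k) + t ≠ 0) then jac (χ ^ s) (χ ^ t) * jac (χ⁻¹ ^ s) (χ ^ v) else 0)
        = 1 - (-1:ℂ)^s * (∑ v ∈ Finset.Icc 1 (k-1),
            if (v : ZMod k) - s ≠ 0 then jac (χ⁻¹ ^ s) (χ ^ v) else 0) := by
      intro s hsm
      have hsb := Finset.mem_Icc.mp hsm
      have e2 : ∀ t ∈ Finset.Icc 1 (k-1),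
          (∑ v ∈ Finset.Icc 1 (k-1),
            if ¬ ((s : ZMod k) + t ≠ 0) then jac (χ ^ s) (χ ^ t) * jac (χ⁻¹ ^ s) (χ ^ v) else 0)
          = if ¬ ((s : ZMod k) + t ≠ 0) then
              jac (χ ^ s) (χ ^ t) * ∑ v ∈ Finset.Icc 1 (k-1), jac (χ⁻¹ ^ s) (χ ^ v) else 0 := by
        intro t htm
        by_cases h : (s : ZMod k) + (t : ZMod k) ≠ 0
        · simp [h]
        · simp [h, Finset.mul_sum]
      rw [Finset.sum_congr rfl e2, ← Finset.sum_filter, filter_add_eq hk hsm,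
        Finset.sum_singleton, pow_k_sub hχ (by omega : s ≤ k), jac_inv (hne s hsm),
        neg_pow_app hneg (by omega), hWin s hsm]
      linear_combination (∑ v ∈ Finset.Icc 1 (k-1),
        if (v : ZMod k) - s ≠ 0 then jac (χ⁻¹ ^ s) (χ ^ v) else 0) * 0 + hsq s
    rw [Finset.sum_congr rfl e1, Finset.sum_sub_distrib, Finset.sum_const, hDcard,
      nsmul_eq_mul, hk1, mul_one]
    have e3 : ∀ s ∈ Finset.Icc 1 (k-1),
        (-1:ℂ)^s * (∑ v ∈ Finset.Icc 1 (k-1),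
          if (v : ZMod k) - s ≠ 0 then jac (χ⁻¹ ^ s) (χ ^ v) else 0)
        = ∑ v ∈ Finset.Icc 1 (k-1),
          if (v : ZMod k) - s ≠ 0 then (-1:ℂ)^s * jac (χ⁻¹ ^ s) (χ ^ v) else 0 := by
      intro s hsm
      rw [Finset.mul_sum]
      exact Finset.sum_congr rfl fun v hv => by rw [mul_ite, mul_zero]
    rw [Finset.sum_congr rfl e3, sumZW hk hkeven hχ hneg]
  have hT2 : ∑ s ∈ Finset.Icc 1 (k-1), ∑ t ∈ Finset.Icc 1 (k-1), ∑ v ∈ Finset.Icc 1 (k-1),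
      (if ((s : ZMod k) + t ≠ 0) ∧ ¬ ((v : ZMod k) + t ≠ 0) then
        jac (χ ^ s) (χ ^ t) * jac (χ⁻¹ ^ s) (χ ^ v) else 0)
      = (q:ℂ) * (((k:ℂ) - 1) * ((k:ℂ) - 2)) := by
    have e1 : ∀ s ∈ Finset.Icc 1 (k-1), ∀ t ∈ Finset.Icc 1 (k-1),
        (∑ v ∈ Finset.Icc 1 (k-1),
          if ((s : ZMod k) + t ≠ 0) ∧ ¬ ((v : ZMod k) + t ≠ 0) then
            jac (χ ^ s) (χ ^ t) * jac (χ⁻¹ ^ s) (χ ^ v) else 0)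
        = if (s : ZMod k) + t ≠ 0 then (q:ℂ) else 0 := by
      intro s hsm t htm
      have htb := Finset.mem_Icc.mp htm
      have h2 : ∀ v ∈ Finset.Icc 1 (k-1),
          (if ((s : ZMod k) + t ≠ 0) ∧ ¬ ((v : ZMod k) + t ≠ 0) then
            jac (χ ^ s) (χ ^ t) * jac (χ⁻¹ ^ s) (χ ^ v) else 0)
          = if ¬ ((v : ZMod k) + t ≠ 0) then
              (if (s : ZMod k) + t ≠ 0 then
                jac (χ ^ s) (χ ^ t) * jac (χ⁻¹ ^ s) (χ ^ v) else 0) else 0 := by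
        intro v hv
        by_cases hq1 : (s : ZMod k) + t ≠ 0 <;> by_cases hq2 : (v : ZMod k) + t ≠ 0 <;>
          simp [hq1, hq2]
      rw [Finset.sum_congr rfl h2, ← Finset.sum_filter, filter_add_eq2 hk htm,
        Finset.sum_singleton]
      split_ifs with h
      · have hstk : s + t ≠ k := fun hh => h ((cond_add hk hsm htm).mpr hh)
        rw [pow_k_sub hχ (by omega : t ≤ k), inv_pow,
          jac_mul_jac_inv (hne s hsm) (hne t htm) (pow_mul_ne_one hk hχ hsm htm hstk), hQ]
      · rfl
    rw [Finset.sum_congr rfl (fun s hs => Finset.sum_congr rfl (e1 s hs))]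
    have e4 : ∀ s ∈ Finset.Icc 1 (k-1),
        ∑ t ∈ Finset.Icc 1 (k-1), (if (s : ZMod k) + t ≠ 0 then (q:ℂ) else 0)
        = ((k:ℂ) - 2) * q := by
      intro s hsm
      rw [← Finset.sum_filter, Finset.sum_const, nsmul_eq_mul]
      have h3 := Finset.card_filter_add_card_filter_not (s := Finset.Icc 1 (k-1))
        (p := fun t : ℕ => (s : ZMod k) + (t : ZMod k) ≠ 0)
      rw [filter_add_eq hk hsm, Finset.card_singleton, hDcard] at h3
      have h4 : ((Finset.Icc 1 (k-1)).filter
          (fun t : ℕ => (s : ZMod k) + (t : ZMod k) ≠ 0)).card = k - 2 := by omega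
      rw [h4, Nat.cast_sub (by omega : 2 ≤ k)]
      norm_num
    rw [Finset.sum_congr rfl e4, Finset.sum_const, hDcard, nsmul_eq_mul, hk1]
    ring
  have hT3 : ∑ s ∈ Finset.Icc 1 (k-1), ∑ t ∈ Finset.Icc 1 (k-1), ∑ v ∈ Finset.Icc 1 (k-1),
      (if ((s : ZMod k) + t ≠ 0) ∧ ((v : ZMod k) + t ≠ 0) ∧ ¬ ((v : ZMod k) - s ≠ 0) then
        jac (χ ^ s) (χ ^ t) * jac (χ⁻¹ ^ s) (χ ^ v) else 0)
      = -Rk k χ := by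
    have e1 : ∀ s ∈ Finset.Icc 1 (k-1), ∀ t ∈ Finset.Icc 1 (k-1),
        (∑ v ∈ Finset.Icc 1 (k-1),
          if ((s : ZMod k) + t ≠ 0) ∧ ((v : ZMod k) + t ≠ 0) ∧ ¬ ((v : ZMod k) - s ≠ 0) then
            jac (χ ^ s) (χ ^ t) * jac (χ⁻¹ ^ s) (χ ^ v) else 0)
        = -(if (s : ZMod k) + t ≠ 0 then (-1:ℂ)^s * jac (χ ^ s) (χ ^ t) else 0) := by
      intro s hsm t htm
      have hsb := Finset.mem_Icc.mp hsm
      have h2 : ∀ v ∈ Finset.Icc 1 (k-1),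
          (if ((s : ZMod k) + t ≠ 0) ∧ ((v : ZMod k) + t ≠ 0) ∧ ¬ ((v : ZMod k) - s ≠ 0) then
            jac (χ ^ s) (χ ^ t) * jac (χ⁻¹ ^ s) (χ ^ v) else 0)
          = if v = s then (if (s : ZMod k) + t ≠ 0 then
              jac (χ ^ s) (χ ^ t) * jac (χ⁻¹ ^ s) (χ ^ v) else 0) else 0 := by
        intro v hv
        by_cases h3 : v = s
        · subst h3
          by_cases h1 : (v : ZMod k) + t ≠ 0 <;> simp [h1, sub_self]
        · have h4 : (v : ZMod k) - s ≠ 0 := fun hh => h3 ((cond_sub hk hv hsm).mp hh)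
          simp [h3, h4]
      rw [Finset.sum_congr rfl h2, Finset.sum_ite_eq' (Finset.Icc 1 (k-1)) s, if_pos hsm]
      have hx : χ ^ s = (χ⁻¹ ^ s)⁻¹ := by rw [inv_pow, inv_inv]
      by_cases h : (s : ZMod k) + t ≠ 0
      · rw [if_pos h, if_pos h, hx, jac_inv (hnei s hsm), inv_neg_pow_app hneg (by omega)]
        rw [← hx]
        ring
      · rw [if_neg h, if_neg h, neg_zero]
    rw [Finset.sum_congr rfl (fun s hs => Finset.sum_congr rfl (e1 s hs))]
    simp only [Finset.sum_neg_distrib]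
    rw [sumZ hk hχ hneg]
  have hsplit4 : ∀ s ∈ Finset.Icc 1 (k-1), ∀ t ∈ Finset.Icc 1 (k-1), ∀ v ∈ Finset.Icc 1 (k-1),
      jac (χ ^ s) (χ ^ t) * jac (χ⁻¹ ^ s) (χ ^ v)
      = (if (s : ZMod k) + t ≠ 0 ∧ (v : ZMod k) + t ≠ 0 ∧ (v : ZMod k) - s ≠ 0 then
          jac (χ ^ s) (χ ^ t) * jac (χ⁻¹ ^ s) (χ ^ v) else 0)
        + ((if ¬ ((s : ZMod k) + t ≠ 0) then
            jac (χ ^ s) (χ ^ t) * jac (χ⁻¹ ^ s) (χ ^ v) else 0)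
        + ((if ((s : ZMod k) + t ≠ 0) ∧ ¬ ((v : ZMod k) + t ≠ 0) then
            jac (χ ^ s) (χ ^ t) * jac (χ⁻¹ ^ s) (χ ^ v) else 0)
        + (if ((s : ZMod k) + t ≠ 0) ∧ ((v : ZMod k) + t ≠ 0) ∧ ¬ ((v : ZMod k) - s ≠ 0) then
            jac (χ ^ s) (χ ^ t) * jac (χ⁻¹ ^ s) (χ ^ v) else 0))) := by
    intro s _ t _ v _
    by_cases h1 : (s : ZMod k) + t ≠ 0 <;> by_cases h2 : (v : ZMod k) + t ≠ 0 <;>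
      by_cases h3 : (v : ZMod k) - s ≠ 0 <;> simp [h1, h2, h3]
  have hT : ∑ s ∈ Finset.Icc 1 (k-1), ∑ t ∈ Finset.Icc 1 (k-1), ∑ v ∈ Finset.Icc 1 (k-1),
      jac (χ ^ s) (χ ^ t) * jac (χ⁻¹ ^ s) (χ ^ v)
      = Sk k χ + ((((k:ℂ) - 1) - Rk k χ)
        + ((q:ℂ) * (((k:ℂ) - 1) * ((k:ℂ) - 2)) + (- Rk k χ))) := by
    rw [Finset.sum_congr rfl (fun s hs => Finset.sum_congr rfl (fun t ht =>
      Finset.sum_congr rfl (fun v hv => hsplit4 s hs t ht v hv)))]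
    simp only [Finset.sum_add_distrib]
    rw [hT1, hT2, hT3]
    rfl
  -- final assembly
  rw [hsplit (fun s => ∑ t ∈ Finset.range k, ∑ v ∈ Finset.range k,
    jac (χ ^ s) (χ ^ t) * jac (χ⁻¹ ^ s) (χ ^ v))]
  have hinner : ∀ s ∈ Finset.Icc 1 (k-1),
      ∑ t ∈ Finset.range k, ∑ v ∈ Finset.range k,
        jac (χ ^ s) (χ ^ t) * jac (χ⁻¹ ^ s) (χ ^ v)
      = (∑ v ∈ Finset.range k, jac (χ ^ s) (χ ^ 0) * jac (χ⁻¹ ^ s) (χ ^ v))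
        + ((∑ t ∈ Finset.Icc 1 (k-1), jac (χ ^ s) (χ ^ t) * jac (χ⁻¹ ^ s) (χ ^ 0))
        + ∑ t ∈ Finset.Icc 1 (k-1), ∑ v ∈ Finset.Icc 1 (k-1),
            jac (χ ^ s) (χ ^ t) * jac (χ⁻¹ ^ s) (χ ^ v)) := by
    intro s hsm
    rw [hsplit (fun t => ∑ v ∈ Finset.range k,
      jac (χ ^ s) (χ ^ t) * jac (χ⁻¹ ^ s) (χ ^ v))]
    congr 1
    rw [← Finset.sum_add_distrib]
    refine Finset.sum_congr rfl fun t htm => ?_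
    rw [hsplit (fun v => jac (χ ^ s) (χ ^ t) * jac (χ⁻¹ ^ s) (χ ^ v))]
  rw [Finset.sum_congr rfl hinner, hP0, Finset.sum_add_distrib, Finset.sum_add_distrib,
    hPB, hPC, hT]
  ring
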